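/- Let 𝔞 be a monomial ideal generated in degree two (so A = S/𝔞 is Koszul). Then any subset I of the minimal generators appearing in the minimal free S-resolution of 𝔞 (i.e., not matched by a standard matching) with cl(I) = 1 satisfies deg(lcm(I)) = |I| + 1. Consequently cl(I) + |I| = deg(lcm(I)) for all unmatched I, and hence Hilb_R(x, t, -1) = Hilb_R(x, 1, -t). -/

import Mathlib

/-! Common framework: multigraded minimal free resolutions, Poincaré–Betti
series, and the Golod property, for `A = S/𝔞` with `S = k[x_1,…,x_v]`. -/

set_option synthInstance.maxHeartbeats 1000000
set_option maxHeartbeats 1000000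
noncomputable section
open MvPolynomial

abbrev Mon (v : ℕ) := Fin v →₀ ℕ
abbrev PolyS (k : Type) [Field k] (v : ℕ) := MvPolynomial (Fin v) k

/-- The multigraded free module over `A` with `b α` generators in multidegree `α`. -/
abbrev FreeMod (v : ℕ) (A : Type) [CommRing A] (b : Mon v → ℕ) :=
  {p : Mon v × ℕ // p.2 < b p.1} →₀ A

variable (k : Type) [Field k] (v : ℕ)

/-- A map of multigraded free `A`-modules (`A = S/𝔞`) is graded and minimal:
the coefficient of the map at a pair of basis elements of multidegrees `β, β'`
is a scalar multiple of (the class of) the monomial `x^{β - β'}`, with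
`β - β' ≠ 0`. -/
def IsGradedMinimalMapQ (𝔞 : Ideal (PolyS k v)) {b b' : Mon v → ℕ}
    (d : FreeMod v (PolyS k v ⧸ 𝔞) b' →ₗ[PolyS k v ⧸ 𝔞] FreeMod v (PolyS k v ⧸ 𝔞) b) : Prop :=
  ∀ p q, d (Finsupp.single p 1) q ∈
    Submodule.span k {x : PolyS k v ⧸ 𝔞 | ∃ γ : Mon v, γ ≠ 0 ∧ γ + q.1.1 = p.1.1 ∧
      x = Ideal.Quotient.mk 𝔞 (monomial γ 1)}

/-- Same, for maps of multigraded free `S`-modules. -/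
def IsGradedMinimalMapS {b b' : Mon v → ℕ}
    (d : FreeMod v (PolyS k v) b' →ₗ[PolyS k v] FreeMod v (PolyS k v) b) : Prop :=
  ∀ p q, d (Finsupp.single p 1) q ∈
    Submodule.span k {x : PolyS k v | ∃ γ : Mon v, γ ≠ 0 ∧ γ + q.1.1 = p.1.1 ∧
      x = monomial γ 1}

/-- `b` is the system of multigraded Betti numbers of a minimal multigraded free
resolution of the residue field `k` over `A = S/𝔞`:
`⋯ → F_1 → F_0 = A → k → 0` with `F_i` having `b i α` generators in degree `α`.
Exactness at `F_0` says that the image of `d 0` is the maximal ideal of `A`. -/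
def IsMinResOfResidueField (𝔞 : Ideal (PolyS k v)) (b : ℕ → Mon v → ℕ) : Prop :=
  (∀ α, b 0 α = if α = 0 then 1 else 0) ∧
  ∃ (h0 : 0 < b 0 0)
    (d : ∀ i : ℕ, FreeMod v (PolyS k v ⧸ 𝔞) (b (i+1)) →ₗ[PolyS k v ⧸ 𝔞]
                    FreeMod v (PolyS k v ⧸ 𝔞) (b i)),
    (∀ i, IsGradedMinimalMapQ k v 𝔞 (d i)) ∧
    (∀ i, LinearMap.range (d (i+1)) = LinearMap.ker (d i)) ∧
    LinearMap.range (d 0) =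
      Submodule.comap (Finsupp.lapply (⟨((0 : Mon v), 0), h0⟩ : {p : Mon v × ℕ // p.2 < b 0 p.1}))
        (Ideal.map (Ideal.Quotient.mk 𝔞)
          (Ideal.span (Set.range (X : Fin v → PolyS k v))))

/-- `b` is the system of multigraded Betti numbers of a minimal multigraded free
resolution of `A = S/𝔞` over `S`:  `⋯ → F_1 → F_0 = S → S/𝔞 → 0`; exactness at
`F_0` says that the image of `d 0` is `𝔞`.  Thus `b i α = dim_k Tor_i^S(A,k)_α`. -/
def IsMinResOfQuotient (𝔞 : Ideal (PolyS k v)) (b : ℕ → Mon v → ℕ) : Prop :=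
  (∀ α, b 0 α = if α = 0 then 1 else 0) ∧
  ∃ (h0 : 0 < b 0 0)
    (d : ∀ i : ℕ, FreeMod v (PolyS k v) (b (i+1)) →ₗ[PolyS k v] FreeMod v (PolyS k v) (b i)),
    (∀ i, IsGradedMinimalMapS k v (d i)) ∧
    (∀ i, LinearMap.range (d (i+1)) = LinearMap.ker (d i)) ∧
    LinearMap.range (d 0) =
      Submodule.comap (Finsupp.lapply (⟨((0 : Mon v), 0), h0⟩ : {p : Mon v × ℕ // p.2 < b 0 p.1}))
        (𝔞 : Submodule (PolyS k v) (PolyS k v))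

/-- encode a pair (multidegree, `t`-degree) as an exponent vector for the
power-series ring in `x_1,…,x_v, t`. -/
def embMon (α : Mon v) (i : ℕ) : (Fin v ⊕ Unit) →₀ ℕ :=
  Finsupp.mapDomain Sum.inl α + Finsupp.single (Sum.inr ()) i

def decMon (e : (Fin v ⊕ Unit) →₀ ℕ) : Mon v :=
  Finsupp.comapDomain Sum.inl e Sum.inl_injective.injOn

def tdeg (e : (Fin v ⊕ Unit) →₀ ℕ) : ℕ := e (Sum.inr ())

/-- build a power series from its coefficient function. -/
def seriesOf (f : ((Fin v ⊕ Unit) →₀ ℕ) → ℚ) : MvPowerSeries (Fin v ⊕ Unit) ℚ := f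

/-- the multigraded Poincaré–Betti series `Σ_{i,α} b i α · x^α t^i`. -/
def PoinSeries (b : ℕ → Mon v → ℕ) : MvPowerSeries (Fin v ⊕ Unit) ℚ :=
  seriesOf v (fun e => (b (tdeg v e) (decMon v e) : ℚ))

/-- `Π_{i=1}^v (1 + x_i t)`. -/
def Numer : MvPowerSeries (Fin v ⊕ Unit) ℚ :=
  ∏ i : Fin v, (1 + MvPowerSeries.monomial (embMon v (Finsupp.single i 1) 1) (1 : ℚ))

open scoped Classical in
/-- the Golod denominator `1 - t Σ_{i,α} dim_k Tor_i^S(A,k)_α x^α t^i`. -/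
def GolodDenom (bS : ℕ → Mon v → ℕ) : MvPowerSeries (Fin v ⊕ Unit) ℚ :=
  seriesOf v (fun e =>
    if tdeg v e = 0 then (if e = 0 then 1 else 0) else -(bS (tdeg v e - 1) (decMon v e) : ℚ))

/-- `A = S/𝔞` is Golod:  `P^A_k(x,t) = Π (1+x_i t) / (1 - t Σ dim_k Tor_i^S(A,k)_α x^α t^i)`. -/
def IsGolod (𝔞 : Ideal (PolyS k v)) : Prop :=
  ∀ b bS, IsMinResOfResidueField k v 𝔞 b → IsMinResOfQuotient k v 𝔞 bS →
    PoinSeries v b * GolodDenom v bS = Numer v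

/-!
STATEMENT 9: Let `𝔞` be a monomial ideal generated in degree two (so `A = S/𝔞`
is Koszul).  Any subset `I` of the minimal generators appearing in the minimal
free resolution of `S/𝔞` over `S` (its Betti number in homological degree `|I|`
and multidegree `lcm(I)` is nonzero) with `cl(I) = 1` satisfies
`deg(lcm(I)) = |I| + 1`.  Consequently `cl(I) + |I| = deg(lcm(I))` for all
unmatched `I`, and hence `Hilb_R(x,t,-1) = Hilb_R(x,1,-t)` (stated as the
equality of the corresponding denominators
`1 + Σ_I (-1)^{|I|} m_I t^{‖m_I‖} = 1 + Σ_I (-1)^{|I|} m_I t^{cl(I)+|I|}`).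
-/

/-- `lcm` of a finite set of monomials. -/
def lcmF {v : ℕ} (I : Finset (Mon v)) : Mon v := I.sup id

/-- the number of equivalence classes of `I` under the transitive closure of
non-coprimality. -/
noncomputable def clM {v : ℕ} (I : Finset (Mon v)) : ℕ :=
  Nat.card ((SimpleGraph.fromRel
    (fun a b : I => ¬ Disjoint (a : Mon v).support (b : Mon v).support)).ConnectedComponent)

/-- `J` is one of the equivalence classes (connected components) of `I`. -/
noncomputable def IsComponent {v : ℕ} (J I : Finset (Mon v)) : Prop :=
  J ⊆ I ∧ J.Nonempty ∧ clM J = 1 ∧ Disjoint (lcmF J).support (lcmF (I \ J)).support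

/-- `I` appears in the minimal free resolution of `S/𝔞` over `S`: the Betti
number in homological degree `|I|` and multidegree `lcm(I)` is nonzero. -/
def BettiSupported (k : Type) [Field k] (v : ℕ) (𝔞 : Ideal (PolyS k v))
    (I : Finset (Mon v)) : Prop :=
  ∃ bS, IsMinResOfQuotient k v 𝔞 bS ∧ bS I.card (lcmF I) ≠ 0

/-! ### Auxiliary infrastructure for the proof -/

namespace KoszulAux

open Finset

variable {v : ℕ}

/-- total degree of a monomial -/
def mdeg (α : Mon v) : ℕ := α.sum fun _ e => e

lemma mdeg_eq_sum (α : Mon v) : mdeg α = ∑ i, α i :=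
  Finsupp.sum_fintype _ _ fun _ => rfl

lemma mdeg_add (α β : Mon v) : mdeg (α + β) = mdeg α + mdeg β := by
  simp [mdeg_eq_sum, Finset.sum_add_distrib]

lemma mdeg_mono {α β : Mon v} (h : α ≤ β) : mdeg α ≤ mdeg β := by
  rw [mdeg_eq_sum, mdeg_eq_sum]
  exact Finset.sum_le_sum fun i _ => Finsupp.le_def.mp h i

lemma one_le_mdeg {α : Mon v} (h : α ≠ 0) : 1 ≤ mdeg α := by
  rcases Finsupp.ne_iff.mp h with ⟨i, hi⟩
  simp only [Finsupp.coe_zero, Pi.zero_apply] at hi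
  rw [mdeg_eq_sum]
  calc 1 ≤ α i := Nat.one_le_iff_ne_zero.mpr hi
  _ ≤ ∑ j, α j := Finset.single_le_sum (fun _ _ => Nat.zero_le _) (Finset.mem_univ i)

lemma support_subset_of_le {α β : Mon v} (h : α ≤ β) : α.support ⊆ β.support := by
  intro i hi
  rw [Finsupp.mem_support_iff] at hi ⊢
  have := Finsupp.le_def.mp h i
  omega

lemma mdeg_sup_of_disjoint {α β : Mon v} (h : Disjoint α.support β.support) :
    mdeg (α ⊔ β) = mdeg α + mdeg β := by
  rw [mdeg_eq_sum, mdeg_eq_sum, mdeg_eq_sum, ← Finset.sum_add_distrib]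
  refine Finset.sum_congr rfl fun i _ => ?_
  have hz : α i = 0 ∨ β i = 0 := by
    by_contra h'
    push_neg at h'
    exact (Finset.disjoint_left.mp h (Finsupp.mem_support_iff.mpr h'.1))
      (Finsupp.mem_support_iff.mpr h'.2)
  rw [Finsupp.sup_apply]
  omega

lemma mdeg_sup_le_of_shared {α β : Mon v} (i : Fin v)
    (hiα : i ∈ α.support) (hiβ : i ∈ β.support) :
    mdeg (α ⊔ β) + 1 ≤ mdeg α + mdeg β := by
  rw [mdeg_eq_sum, mdeg_eq_sum, mdeg_eq_sum]
  have e1 : ∑ j, (α ⊔ β) j = (α ⊔ β) i + ∑ j ∈ Finset.univ.erase i, (α ⊔ β) j :=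
    (Finset.add_sum_erase _ _ (Finset.mem_univ i)).symm
  have e2 : ∑ j, α j = α i + ∑ j ∈ Finset.univ.erase i, α j :=
    (Finset.add_sum_erase _ _ (Finset.mem_univ i)).symm
  have e3 : ∑ j, β j = β i + ∑ j ∈ Finset.univ.erase i, β j :=
    (Finset.add_sum_erase _ _ (Finset.mem_univ i)).symm
  have hterm : (α ⊔ β) i + 1 ≤ α i + β i := by
    rw [Finsupp.sup_apply]
    have h1 := Finsupp.mem_support_iff.mp hiα
    have h2 := Finsupp.mem_support_iff.mp hiβ
    omega
  have hrest : ∑ j ∈ Finset.univ.erase i, (α ⊔ β) j ≤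
      (∑ j ∈ Finset.univ.erase i, α j) + ∑ j ∈ Finset.univ.erase i, β j := by
    rw [← Finset.sum_add_distrib]
    refine Finset.sum_le_sum fun j _ => ?_
    rw [Finsupp.sup_apply]
    omega
  omega

lemma le_lcmF {I : Finset (Mon v)} {a : Mon v} (ha : a ∈ I) : a ≤ lcmF I :=
  Finset.le_sup (f := id) ha

lemma lcmF_mono {I J : Finset (Mon v)} (h : I ⊆ J) : lcmF I ≤ lcmF J :=
  Finset.sup_mono h

lemma lcmF_union (I J : Finset (Mon v)) : lcmF (I ∪ J) = lcmF I ⊔ lcmF J :=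
  Finset.sup_union

lemma lcmF_insert (a : Mon v) (I : Finset (Mon v)) : lcmF (insert a I) = a ⊔ lcmF I :=
  Finset.sup_insert

lemma lcmF_singleton (a : Mon v) : lcmF {a} = a :=
  Finset.sup_singleton

lemma mem_support_lcmF {I : Finset (Mon v)} {i : Fin v} :
    i ∈ (lcmF I).support ↔ ∃ a ∈ I, i ∈ a.support := by
  classical
  induction I using Finset.induction with
  | empty =>
      have hbot : lcmF (∅ : Finset (Mon v)) = 0 := Finset.sup_empty
      simp [hbot]
  | insert _ _ h ih =>
      rw [lcmF_insert, Finsupp.support_sup]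
      simp [ih]

/-! ### the non-coprimality relation -/

def stepRel (I : Finset (Mon v)) (a b : Mon v) : Prop :=
  a ∈ I ∧ b ∈ I ∧ a ≠ b ∧ ¬ Disjoint a.support b.support

def RRel (I : Finset (Mon v)) : Mon v → Mon v → Prop := Relation.ReflTransGen (stepRel I)

lemma stepRel_symm {I : Finset (Mon v)} : Symmetric (stepRel I) :=
  fun _ _ ⟨h1, h2, h3, h4⟩ => ⟨h2, h1, h3.symm, fun hd => h4 hd.symm⟩

lemma RRel.symm {I : Finset (Mon v)} {a b : Mon v} (h : RRel I a b) : RRel I b a :=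
  haveI : Std.Symm (stepRel I) := ⟨fun _ _ hh => stepRel_symm hh⟩
  Std.Symm.symm (r := Relation.ReflTransGen (stepRel I)) _ _ h

lemma RRel.mono {I J : Finset (Mon v)} (hIJ : I ⊆ J) {a b : Mon v} (h : RRel I a b) :
    RRel J a b :=
  Relation.ReflTransGen.mono (r := stepRel I) (p := stepRel J) (fun _ _ ⟨h1, h2, h3, h4⟩ => ⟨hIJ h1, hIJ h2, h3, h4⟩) _ _ h

def graphOf (I : Finset (Mon v)) : SimpleGraph I :=
  SimpleGraph.fromRel (fun a b => ¬ Disjoint (a : Mon v).support (b : Mon v).support)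

lemma clM_def (I : Finset (Mon v)) : clM I = Nat.card (graphOf I).ConnectedComponent := rfl

lemma reachable_iff {I : Finset (Mon v)} {a b : I} :
    (graphOf I).Reachable a b ↔ RRel I a.1 b.1 := by
  constructor
  · intro h
    rw [SimpleGraph.reachable_iff_reflTransGen] at h
    refine Relation.ReflTransGen.lift (p := stepRel I) Subtype.val ?_ _ _ h
    rintro x y hxy
    rw [graphOf, SimpleGraph.fromRel_adj] at hxy
    exact ⟨x.2, y.2, fun hv => hxy.1 (Subtype.ext hv), hxy.2.elim id fun h' hd => h' hd.symm⟩
  · intro h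
    have key : ∀ {c : Mon v}, RRel I a.1 c → ∀ (hc : c ∈ I),
        (graphOf I).Reachable a ⟨c, hc⟩ := by
      intro c h
      induction h with
      | refl =>
          intro hc
          have : (⟨a.1, hc⟩ : I) = a := Subtype.ext rfl
          rw [this]
      | @tail c d hac hcd ih =>
          intro hd
          have hc := hcd.1
          refine (ih hc).trans (SimpleGraph.Adj.reachable ?_)
          rw [graphOf, SimpleGraph.fromRel_adj]
          exact ⟨fun he => hcd.2.2.1 (congrArg Subtype.val he), Or.inl hcd.2.2.2⟩
    have := key h b.2
    simpa using this

noncomputable def compF (I : Finset (Mon v)) (a : Mon v) : Finset (Mon v) :=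
  @Finset.filter _ (RRel I a) (Classical.decPred _) I

lemma mem_compF {I : Finset (Mon v)} {a x : Mon v} :
    x ∈ compF I a ↔ x ∈ I ∧ RRel I a x :=
  @Finset.mem_filter _ (RRel I a) (Classical.decPred _) I x

lemma compF_subset (I : Finset (Mon v)) (a : Mon v) : compF I a ⊆ I :=
  fun _ hx => (mem_compF.mp hx).1

lemma mem_compF_self {I : Finset (Mon v)} {a : Mon v} (ha : a ∈ I) : a ∈ compF I a :=
  mem_compF.mpr ⟨ha, Relation.ReflTransGen.refl⟩

lemma compF_congr {I : Finset (Mon v)} {a b : Mon v} (h : RRel I a b) :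
    compF I a = compF I b := by
  ext x
  rw [mem_compF, mem_compF]
  exact and_congr_right fun _ => ⟨fun h2 => h.symm.trans h2, fun h2 => h.trans h2⟩

noncomputable def classToFinset (I : Finset (Mon v)) :
    (graphOf I).ConnectedComponent → {A // A ∈ I.image (compF I)} :=
  Quot.lift (fun a : I => (⟨compF I a.1, Finset.mem_image_of_mem _ a.2⟩ :
      {A // A ∈ I.image (compF I)}))
    (fun a b hab => Subtype.ext (compF_congr (reachable_iff.mp hab)))

lemma classToFinset_mk {I : Finset (Mon v)} (a : I) :
    classToFinset I ((graphOf I).connectedComponentMk a) =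
      ⟨compF I a.1, Finset.mem_image_of_mem _ a.2⟩ := rfl

lemma clM_eq_card_image (I : Finset (Mon v)) : clM I = (I.image (compF I)).card := by
  rw [clM_def]
  have hf : Function.Bijective (classToFinset I) := by
    constructor
    · intro c d
      revert c d
      refine SimpleGraph.ConnectedComponent.ind₂ ?_
      intro a b h
      rw [classToFinset_mk, classToFinset_mk] at h
      have h' : compF I a.1 = compF I b.1 := congrArg Subtype.val h
      have hr : RRel I a.1 b.1 := (mem_compF.mp (h' ▸ mem_compF_self b.2)).2
      exact SimpleGraph.ConnectedComponent.sound (reachable_iff.mpr hr)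
    · rintro ⟨A, hA⟩
      obtain ⟨m, hm, rfl⟩ := Finset.mem_image.mp hA
      exact ⟨(graphOf I).connectedComponentMk ⟨m, hm⟩, rfl⟩
  rw [Nat.card_eq_of_bijective _ hf, Nat.card_eq_finsetCard]

lemma clM_eq_one_iff {I : Finset (Mon v)} :
    clM I = 1 ↔ I.Nonempty ∧ ∀ a ∈ I, ∀ b ∈ I, RRel I a b := by
  rw [clM_eq_card_image]
  constructor
  · intro h
    rcases Finset.card_eq_one.mp h with ⟨A, hA⟩
    have hne : I.Nonempty := by
      by_contra he
      rw [Finset.not_nonempty_iff_eq_empty] at he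
      subst he
      rw [Finset.image_empty] at hA
      exact (Finset.singleton_ne_empty A) hA.symm
    refine ⟨hne, fun a ha b hb => ?_⟩
    have h1 : compF I a ∈ I.image (compF I) := Finset.mem_image_of_mem _ ha
    have h2 : compF I b ∈ I.image (compF I) := Finset.mem_image_of_mem _ hb
    rw [hA, Finset.mem_singleton] at h1 h2
    have heq : compF I a = compF I b := h1.trans h2.symm
    exact (mem_compF.mp (heq ▸ mem_compF_self hb)).2
  · rintro ⟨⟨a0, ha0⟩, hconn⟩
    rw [Finset.card_eq_one]
    refine ⟨I, ?_⟩
    ext A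
    simp only [Finset.mem_image, Finset.mem_singleton]
    constructor
    · rintro ⟨m, hm, rfl⟩
      ext x
      rw [mem_compF]
      exact ⟨fun h => h.1, fun hx => ⟨hx, hconn m hm x hx⟩⟩
    · rintro rfl
      refine ⟨a0, ha0, ?_⟩
      ext x
      rw [mem_compF]
      exact ⟨fun h => h.1, fun hx => ⟨hx, hconn a0 ha0 x hx⟩⟩

lemma RRel.closed {I T : Finset (Mon v)} (hT : ∀ x ∈ T, ∀ y, stepRel I x y → y ∈ T)
    {a b : Mon v} (ha : a ∈ T) (h : RRel I a b) : b ∈ T ∧ RRel T a b := by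
  induction h with
  | refl => exact ⟨ha, Relation.ReflTransGen.refl⟩
  | tail hac hcd ih =>
      obtain ⟨hcT, hr⟩ := ih
      have hdT := hT _ hcT _ hcd
      exact ⟨hdT, hr.tail ⟨hcT, hdT, hcd.2.2.1, hcd.2.2.2⟩⟩

lemma compF_eq_of_closed {I J : Finset (Mon v)} (hJI : J ⊆ I)
    (hcl : ∀ x ∈ J, ∀ y, stepRel I x y → y ∈ J) {a : Mon v} (ha : a ∈ J) :
    compF I a = compF J a := by
  ext x
  rw [mem_compF, mem_compF]
  constructor
  · rintro ⟨hxI, hr⟩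
    exact ⟨(RRel.closed hcl ha hr).1, (RRel.closed hcl ha hr).2⟩
  · rintro ⟨hxJ, hr⟩
    exact ⟨hJI hxJ, hr.mono hJI⟩

lemma clM_union {J K : Finset (Mon v)} (hd : Disjoint J K)
    (hcop : ∀ a ∈ J, ∀ b ∈ K, Disjoint (a : Mon v).support b.support) :
    clM (J ∪ K) = clM J + clM K := by
  classical
  have hclJ : ∀ x ∈ J, ∀ y, stepRel (J ∪ K) x y → y ∈ J := by
    intro x hx y hs
    rcases Finset.mem_union.mp hs.2.1 with h | h
    · exact h
    · exact absurd (hcop x hx y h) hs.2.2.2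
  have hclK : ∀ x ∈ K, ∀ y, stepRel (J ∪ K) x y → y ∈ K := by
    intro x hx y hs
    rcases Finset.mem_union.mp hs.2.1 with h | h
    · exact absurd (hcop y h x hx).symm hs.2.2.2
    · exact h
  rw [clM_eq_card_image, clM_eq_card_image, clM_eq_card_image, Finset.image_union]
  have h1 : J.image (compF (J ∪ K)) = J.image (compF J) :=
    Finset.image_congr fun a ha => compF_eq_of_closed Finset.subset_union_left hclJ ha
  have h2 : K.image (compF (J ∪ K)) = K.image (compF K) :=
    Finset.image_congr fun a ha => compF_eq_of_closed Finset.subset_union_right hclK ha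
  rw [h1, h2]
  refine Finset.card_union_of_disjoint ?_
  rw [Finset.disjoint_left]
  rintro A hA hA'
  obtain ⟨a, ha, rfl⟩ := Finset.mem_image.mp hA
  obtain ⟨b, hb, hEq⟩ := Finset.mem_image.mp hA'
  have haJ : a ∈ J := ha
  have haK : a ∈ K := compF_subset K b (hEq ▸ mem_compF_self ha)
  exact Finset.disjoint_left.mp hd haJ haK

lemma exists_crossing {I J : Finset (Mon v)} (hJI : J ⊆ I) (hJne : J.Nonempty)
    (hKne : (I \ J).Nonempty) (hconn : ∀ a ∈ I, ∀ b ∈ I, RRel I a b) :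
    ∃ m ∈ I, m ∉ J ∧ ¬ Disjoint m.support (lcmF J).support := by
  obtain ⟨a, ha⟩ := hJne
  obtain ⟨b, hb⟩ := hKne
  rw [Finset.mem_sdiff] at hb
  have hch := hconn a (hJI ha) b hb.1
  have claim : ∀ {c : Mon v}, RRel I a c →
      c ∈ J ∨ ∃ m ∈ I, m ∉ J ∧ ¬ Disjoint m.support (lcmF J).support := by
    intro c h
    induction h with
    | refl => exact Or.inl ha
    | @tail c d hac hcd ih =>
        rcases ih with hcJ | hw
        · by_cases hdJ : d ∈ J
          · exact Or.inl hdJ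
          · refine Or.inr ⟨d, hcd.2.1, hdJ, fun hdis => hcd.2.2.2 ?_⟩
            exact (hdis.mono_right (support_subset_of_le (le_lcmF hcJ))).symm
        · exact Or.inr hw
  rcases claim hch with h | h
  · exact absurd h hb.2
  · exact h

lemma mdeg_lcmF_le {G₀ I : Finset (Mon v)} (hdeg : ∀ m ∈ G₀, mdeg m = 2)
    (hIG : I ⊆ G₀) (hne : I.Nonempty)
    (hconn : ∀ a ∈ I, ∀ b ∈ I, RRel I a b) :
    mdeg (lcmF I) ≤ I.card + 1 := by
  classical
  obtain ⟨a0, ha0⟩ := hne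
  have key : ∀ n (J : Finset (Mon v)), J ⊆ I → J.Nonempty → I.card - J.card = n →
      mdeg (lcmF J) ≤ J.card + 1 → mdeg (lcmF I) ≤ I.card + 1 := by
    intro n
    induction n with
    | zero =>
        intro J hJ hJne hcard hb
        have hle := Finset.card_le_card hJ
        have hJI : J = I := Finset.eq_of_subset_of_card_le hJ (by omega)
        rw [← hJI]
        omega
    | succ n ih =>
        intro J hJ hJne hcard hb
        have hle := Finset.card_le_card hJ
        have hlt : J.card < I.card := by omega
        have hKne : (I \ J).Nonempty := by
          rw [Finset.sdiff_nonempty]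
          intro hsub
          exact absurd (Finset.card_le_card hsub) (by omega)
        obtain ⟨m, hmI, hmJ, hshare⟩ := exists_crossing hJ hJne hKne hconn
        have hmdeg : mdeg m = 2 := hdeg m (hIG hmI)
        obtain ⟨i, hi1, hi2⟩ := Finset.not_disjoint_iff.mp hshare
        have hstep : mdeg (lcmF (insert m J)) + 1 ≤ mdeg m + mdeg (lcmF J) := by
          rw [lcmF_insert]
          exact mdeg_sup_le_of_shared i hi1 hi2
        have hcard' : (insert m J).card = J.card + 1 := Finset.card_insert_of_notMem hmJ
        exact ih (insert m J) (Finset.insert_subset hmI hJ) (Finset.insert_nonempty _ _)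
          (by omega) (by omega)
  have hb0 : mdeg (lcmF ({a0} : Finset (Mon v))) ≤ ({a0} : Finset (Mon v)).card + 1 := by
    rw [lcmF_singleton, Finset.card_singleton, hdeg a0 (hIG ha0)]
  exact key (I.card - 1) {a0} (Finset.singleton_subset_iff.mpr ha0)
    (Finset.singleton_nonempty _) (by rw [Finset.card_singleton]) hb0

lemma compF_closed {I : Finset (Mon v)} {m0 : Mon v} (hm0 : m0 ∈ I) :
    ∀ x ∈ compF I m0, ∀ y, stepRel I x y → y ∈ compF I m0 := by
  intro x hx y hs
  exact mem_compF.mpr ⟨hs.2.1, ((mem_compF.mp hx).2).tail hs⟩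

lemma clM_compF_eq_one {I : Finset (Mon v)} {m0 : Mon v} (hm0 : m0 ∈ I) :
    clM (compF I m0) = 1 := by
  refine clM_eq_one_iff.mpr ⟨⟨m0, mem_compF_self hm0⟩, ?_⟩
  intro a ha b hb
  have h1 := (mem_compF.mp ha).2
  have h2 := (mem_compF.mp hb).2
  have h3 : RRel I a b := h1.symm.trans h2
  exact (RRel.closed (compF_closed hm0) ha h3).2

lemma disj_compF {I : Finset (Mon v)} {m0 : Mon v} (hm0 : m0 ∈ I) :
    Disjoint (lcmF (compF I m0)).support (lcmF (I \ compF I m0)).support := by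
  rw [Finset.disjoint_left]
  intro i h1 h2
  obtain ⟨a, haJ, hia⟩ := mem_support_lcmF.mp h1
  obtain ⟨b, hbK, hib⟩ := mem_support_lcmF.mp h2
  rw [Finset.mem_sdiff] at hbK
  have hab : a ≠ b := fun h => hbK.2 (h ▸ haJ)
  have hstep : stepRel I a b :=
    ⟨compF_subset I m0 haJ, hbK.1, hab, Finset.not_disjoint_iff.mpr ⟨i, hia, hib⟩⟩
  exact hbK.2 (compF_closed hm0 a haJ b hstep)

lemma isComponent_compF {I : Finset (Mon v)} {m0 : Mon v} (hm0 : m0 ∈ I) :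
    IsComponent (compF I m0) I :=
  ⟨compF_subset I m0, ⟨m0, mem_compF_self hm0⟩, clM_compF_eq_one hm0, disj_compF hm0⟩

end KoszulAux

namespace KoszulAux

lemma betti_lb {k : Type} [Field k] {v : ℕ} {G : Finset (Mon v)}
    (hdeg : ∀ m ∈ G, mdeg m = 2)
    {𝔞 : Ideal (PolyS k v)}
    (h𝔞 : 𝔞 = Ideal.span ((fun α => (monomial α (1 : k) : PolyS k v)) '' (G : Set (Mon v))))
    {bS : ℕ → Mon v → ℕ} (hres : IsMinResOfQuotient k v 𝔞 bS) :
    ∀ n (α : Mon v), bS (n + 1) α ≠ 0 → n + 2 ≤ mdeg α := by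
  classical
  obtain ⟨hb0, h0, d, hminS, hex, hrange⟩ := hres
  set φ : PolyS k v →ₐ[k] k := aeval (fun _ => (0 : k)) with hφ
  have hφmon : ∀ γ : Mon v, γ ≠ 0 → φ (monomial γ (1 : k)) = 0 := by
    intro γ hγ
    rw [hφ, aeval_monomial]
    obtain ⟨i, hi⟩ := Finsupp.ne_iff.mp hγ
    simp only [Finsupp.coe_zero, Pi.zero_apply] at hi
    have hmem : i ∈ γ.support := Finsupp.mem_support_iff.mpr hi
    have : (γ.prod fun _ e => (0 : k) ^ e) = 0 := by
      rw [Finsupp.prod]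
      exact Finset.prod_eq_zero hmem (zero_pow hi)
    rw [this, mul_zero]
  have hφspan : ∀ (i : ℕ) (p : {p : Mon v × ℕ // p.2 < bS (i + 1) p.1})
      (q : {p : Mon v × ℕ // p.2 < bS i p.1}),
      φ (d i (Finsupp.single p 1) q) = 0 := by
    intro i p q
    have hmem := hminS i p q
    have hsub : {x : PolyS k v | ∃ γ : Mon v, γ ≠ 0 ∧ γ + q.1.1 = p.1.1 ∧
        x = monomial γ 1} ⊆ ↑(LinearMap.ker φ.toLinearMap) := by
      rintro x ⟨γ, hγ, -, rfl⟩
      exact LinearMap.mem_ker.mpr (hφmon γ hγ)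
    exact LinearMap.mem_ker.mp (Submodule.span_le.mpr hsub hmem)
  have hconst : ∀ (i : ℕ) (x : FreeMod v (PolyS k v) (bS (i + 1)))
      (q : {p : Mon v × ℕ // p.2 < bS i p.1}), φ ((d i x) q) = 0 := by
    intro i x q
    have hx : d i x = x.sum fun p c => c • d i (Finsupp.single p 1) := by
      conv_lhs => rw [← x.sum_single]
      rw [map_finsuppSum]
      refine Finsupp.sum_congr fun p _ => ?_
      rw [← Finsupp.smul_single_one, map_smul]
    rw [hx, Finsupp.sum_apply, Finsupp.sum]
    rw [map_sum]
    refine Finset.sum_eq_zero fun p _ => ?_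
    rw [Finsupp.smul_apply, smul_eq_mul, map_mul, hφspan i p q, mul_zero]
  have hne_d : ∀ (i : ℕ) (p : {p : Mon v × ℕ // p.2 < bS (i + 1) p.1}),
      d i (Finsupp.single p 1) ≠ 0 := by
    intro i p hzero
    have hker : Finsupp.single p (1 : PolyS k v) ∈ LinearMap.ker (d i) :=
      LinearMap.mem_ker.mpr hzero
    rw [← hex i] at hker
    obtain ⟨x, hxeq⟩ := hker
    have h1 : (d (i + 1) x) p = 1 := by rw [hxeq, Finsupp.single_eq_same]
    have h2 := hconst (i + 1) x p
    rw [h1, map_one] at h2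
    exact one_ne_zero h2
  have L1 : ∀ (i : ℕ) (α : Mon v), bS (i + 1) α ≠ 0 →
      ∃ β, bS i β ≠ 0 ∧ ∃ γ : Mon v, γ ≠ 0 ∧ γ + β = α := by
    intro i α hα
    have hp : (0 : ℕ) < bS (i + 1) α := Nat.pos_of_ne_zero hα
    set p : {p : Mon v × ℕ // p.2 < bS (i + 1) p.1} := ⟨(α, 0), hp⟩ with hpdef
    obtain ⟨q, hq⟩ : ∃ q, d i (Finsupp.single p 1) q ≠ 0 := by
      by_contra h
      push_neg at h
      exact hne_d i p (Finsupp.ext h)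
    have hmem := hminS i p q
    by_cases hex2 : ∃ γ : Mon v, γ ≠ 0 ∧ γ + q.1.1 = α
    · obtain ⟨γ, hγ0, hγ⟩ := hex2
      have hq2 := q.2
      exact ⟨q.1.1, by omega, γ, hγ0, hγ⟩
    · exfalso
      have hempty : {x : PolyS k v | ∃ γ : Mon v, γ ≠ 0 ∧ γ + q.1.1 = p.1.1 ∧
          x = monomial γ 1} = ∅ := by
        ext x
        simp only [Set.mem_setOf_eq, Set.mem_empty_iff_false, iff_false]
        rintro ⟨γ, hg1, hg2, -⟩
        exact hex2 ⟨γ, hg1, hg2⟩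
      rw [hempty, Submodule.span_empty] at hmem
      exact hq ((Submodule.mem_bot k).mp hmem)
  have L2 : ∀ α : Mon v, bS 1 α ≠ 0 → 2 ≤ mdeg α := by
    intro α hα
    have hp : (0 : ℕ) < bS (0 + 1) α := Nat.pos_of_ne_zero hα
    set p : {p : Mon v × ℕ // p.2 < bS (0 + 1) p.1} := ⟨(α, 0), hp⟩ with hpdef
    obtain ⟨q, hq⟩ : ∃ q, d 0 (Finsupp.single p 1) q ≠ 0 := by
      by_contra h
      push_neg at h
      exact hne_d 0 p (Finsupp.ext h)
    have hq1 : q.1.1 = 0 := by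
      by_contra h
      have hq2 := q.2
      rw [hb0 q.1.1, if_neg h] at hq2
      omega
    have hq2 : q.1.2 = 0 := by
      have hq2' := q.2
      rw [hb0 q.1.1, if_pos hq1] at hq2'
      omega
    have hmem := hminS 0 p q
    have hsub : {x : PolyS k v | ∃ γ : Mon v, γ ≠ 0 ∧ γ + q.1.1 = p.1.1 ∧
        x = monomial γ 1} ⊆ {(monomial α 1 : PolyS k v)} := by
      rintro x ⟨γ, hγ0, hγ, rfl⟩
      rw [hq1, add_zero] at hγ
      rw [Set.mem_singleton_iff, hγ]
    have hmem' : d 0 (Finsupp.single p 1) q ∈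
        Submodule.span k {(monomial α 1 : PolyS k v)} :=
      Submodule.span_mono hsub hmem
    obtain ⟨c, hc⟩ := Submodule.mem_span_singleton.mp hmem'
    have hcne : c ≠ 0 := by
      rintro rfl
      rw [zero_smul] at hc
      exact hq hc.symm
    have hval : (d 0 (Finsupp.single p 1)) q ∈ 𝔞 := by
      have hr : d 0 (Finsupp.single p 1) ∈ LinearMap.range (d 0) :=
        ⟨Finsupp.single p 1, rfl⟩
      rw [hrange] at hr
      have hr2 := Submodule.mem_comap.mp hr
      rw [Finsupp.lapply_apply] at hr2
      have hqp : q = ⟨((0 : Mon v), 0), h0⟩ := Subtype.ext (Prod.ext hq1 hq2)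
      rw [hqp]
      exact hr2
    rw [← hc] at hval
    have hmon : (monomial α 1 : PolyS k v) ∈ 𝔞 := by
      have heq : (monomial α (1 : k) : PolyS k v) = C c⁻¹ * (c • monomial α 1) := by
        rw [smul_eq_C_mul, ← mul_assoc, ← C_mul, inv_mul_cancel₀ hcne, C_1, one_mul]
      rw [heq]
      exact Ideal.mul_mem_left _ _ hval
    rw [h𝔞] at hmon
    have hall := mem_ideal_span_monomial_image.mp hmon
    have hsupp : α ∈ (monomial α (1 : k) : PolyS k v).support := by
      classical
      rw [support_monomial, if_neg one_ne_zero]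
      exact Finset.mem_singleton_self α
    obtain ⟨m, hmG, hmle⟩ := hall α hsupp
    calc 2 = mdeg m := (hdeg m hmG).symm
    _ ≤ mdeg α := mdeg_mono hmle
  intro n
  induction n with
  | zero => exact fun α h => L2 α h
  | succ n ih =>
      intro α hα
      obtain ⟨β, hβ, γ, hγ0, hγ⟩ := L1 (n + 1) α hα
      have h1 := ih β hβ
      have h2 := one_le_mdeg hγ0
      have h3 : mdeg α = mdeg γ + mdeg β := by rw [← hγ, mdeg_add]
      omega

lemma part1 {k : Type} [Field k] {v : ℕ} {G : Finset (Mon v)}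
    (hdeg : ∀ m ∈ G, mdeg m = 2)
    {𝔞 : Ideal (PolyS k v)}
    (h𝔞 : 𝔞 = Ideal.span ((fun α => (monomial α (1 : k) : PolyS k v)) '' (G : Set (Mon v))))
    (I : Finset (Mon v)) (hIG : I ⊆ G) (hne : I.Nonempty) (hcl : clM I = 1)
    (hB : BettiSupported k v 𝔞 I) : mdeg (lcmF I) = I.card + 1 := by
  obtain ⟨bS, hres, hb⟩ := hB
  have hub := mdeg_lcmF_le hdeg hIG hne (clM_eq_one_iff.mp hcl).2
  have hpos : 0 < I.card := Finset.card_pos.mpr hne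
  have hsucc : I.card - 1 + 1 = I.card := by omega
  have hlb := betti_lb hdeg h𝔞 hres (I.card - 1) (lcmF I) (by rw [hsucc]; exact hb)
  omega

lemma part2 {k : Type} [Field k] {v : ℕ} {G : Finset (Mon v)}
    (hdeg : ∀ m ∈ G, mdeg m = 2)
    {𝔞 : Ideal (PolyS k v)}
    (h𝔞 : 𝔞 = Ideal.span ((fun α => (monomial α (1 : k) : PolyS k v)) '' (G : Set (Mon v))))
    (I : Finset (Mon v)) (hIG : I ⊆ G) (hne : I.Nonempty)
    (hcomp : ∀ J, IsComponent J I → BettiSupported k v 𝔞 J) :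
    mdeg (lcmF I) = clM I + I.card := by
  classical
  have key : ∀ n (I : Finset (Mon v)), I.card ≤ n → I ⊆ G → I.Nonempty →
      (∀ J, IsComponent J I → BettiSupported k v 𝔞 J) →
      mdeg (lcmF I) = clM I + I.card := by
    intro n
    induction n with
    | zero =>
        intro I hc hIG hne _
        have := Finset.card_pos.mpr hne
        omega
    | succ n ih =>
        intro I hc hIG hne hcomp
        obtain ⟨m0, hm0⟩ := hne
        set J := compF I m0 with hJdef
        have hcompJ : IsComponent J I := isComponent_compF hm0
        have hBJ := hcomp J hcompJ
        have hJsub : J ⊆ I := compF_subset I m0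
        have hJG : J ⊆ G := hJsub.trans hIG
        have hJne : J.Nonempty := ⟨m0, mem_compF_self hm0⟩
        have hJ1 : clM J = 1 := clM_compF_eq_one hm0
        have hdegJ : mdeg (lcmF J) = J.card + 1 := part1 hdeg h𝔞 J hJG hJne hJ1 hBJ
        by_cases hJI : J = I
        · rw [← hJI, hdegJ, hJ1]
          omega
        · set K := I \ J with hKdef
          have hKne : K.Nonempty := by
            rw [hKdef, Finset.sdiff_nonempty]
            intro hsub
            exact hJI (Finset.Subset.antisymm hJsub hsub)
          have hUnion : J ∪ K = I := Finset.union_sdiff_of_subset hJsub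
          have hdisjJK : Disjoint J K := Finset.disjoint_sdiff
          have hsupdisj : Disjoint (lcmF J).support (lcmF K).support := hcompJ.2.2.2
          have hcop : ∀ a ∈ J, ∀ b ∈ K, Disjoint (a : Mon v).support b.support := by
            intro a ha b hb
            exact hsupdisj.mono (support_subset_of_le (le_lcmF ha))
              (support_subset_of_le (le_lcmF hb))
          have hcard : J.card + K.card = I.card := by
            rw [← hUnion, Finset.card_union_of_disjoint hdisjJK]
          have hJpos : 0 < J.card := Finset.card_pos.mpr hJne
          have hKle : K.card ≤ n := by omega
          have hKG : K ⊆ G := (hKdef ▸ Finset.sdiff_subset).trans hIG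
          have hcompK : ∀ J', IsComponent J' K → BettiSupported k v 𝔞 J' := by
            intro J' hJ'
            refine hcomp J' ?_
            obtain ⟨hJ'K, hJ'ne, hJ'cl, hJ'disj⟩ := hJ'
            refine ⟨hJ'K.trans (hKdef ▸ Finset.sdiff_subset), hJ'ne, hJ'cl, ?_⟩
            have hmemK : ∀ x, x ∈ K ↔ x ∈ I ∧ x ∉ J := by
              intro x
              rw [hKdef, Finset.mem_sdiff]
            have hsplit : I \ J' = J ∪ (K \ J') := by
              ext x
              rw [Finset.mem_sdiff, Finset.mem_union, Finset.mem_sdiff]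
              constructor
              · rintro ⟨hxI, hxJ'⟩
                by_cases hxJ : x ∈ J
                · exact Or.inl hxJ
                · exact Or.inr ⟨(hmemK x).mpr ⟨hxI, hxJ⟩, hxJ'⟩
              · rintro (hxJ | ⟨hxK, hxJ'⟩)
                · refine ⟨hJsub hxJ, fun hx' => ?_⟩
                  exact ((hmemK _).mp (hJ'K hx')).2 hxJ
                · exact ⟨((hmemK x).mp hxK).1, hxJ'⟩
            rw [hsplit, lcmF_union, Finsupp.support_sup, Finset.disjoint_union_right]
            constructor
            · have hsub2 : (lcmF J').support ⊆ (lcmF K).support :=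
                support_subset_of_le (lcmF_mono hJ'K)
              exact hsupdisj.symm.mono_left hsub2
            · exact hJ'disj
          have hK := ih K hKle hKG hKne hcompK
          have hclM : clM I = 1 + clM K := by
            rw [← hUnion, clM_union hdisjJK hcop, hJ1]
          have hdegI : mdeg (lcmF I) = mdeg (lcmF J) + mdeg (lcmF K) := by
            rw [← hUnion, lcmF_union, mdeg_sup_of_disjoint hsupdisj]
          omega
  exact key I.card I le_rfl hIG hne hcomp

end KoszulAux

theorem koszul_degree_of_unmatched (k : Type) [Field k] (v : ℕ)
    (G : Finset (Mon v))
    (hdeg : ∀ m ∈ G, m.sum (fun _ e => e) = 2)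
    (hmin : ∀ m ∈ G, ∀ u ∈ G, u ≤ m → u = m)
    (𝔞 : Ideal (PolyS k v))
    (h𝔞 : 𝔞 = Ideal.span ((fun α => (monomial α (1 : k) : PolyS k v)) '' (G : Set (Mon v)))) :
    -- (1) unmatched sets with cl = 1 have degree |I| + 1 :
    (∀ I : Finset (Mon v), I ⊆ G → I.Nonempty → clM I = 1 →
      BettiSupported k v 𝔞 I → (lcmF I).sum (fun _ e => e) = I.card + 1) ∧
    -- (2) consequently cl(I) + |I| = deg(lcm(I)) for all unmatched I :
    (∀ I : Finset (Mon v), I ⊆ G → I.Nonempty →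
      (∀ J, IsComponent J I → BettiSupported k v 𝔞 J) →
      (lcmF I).sum (fun _ e => e) = clM I + I.card) ∧
    -- (3) hence Hilb_R(x,t,-1) = Hilb_R(x,1,-t) :
    (∀ Uset : Finset (Finset (Mon v)),
      (∀ I ∈ Uset, I ⊆ G ∧ I.Nonempty ∧ ∀ J, IsComponent J I → BettiSupported k v 𝔞 J) →
      (1 + ∑ I ∈ Uset, MvPowerSeries.monomial
          (embMon v (lcmF I) ((lcmF I).sum (fun _ e => e))) ((-1 : ℚ) ^ I.card)) =
      (1 + ∑ I ∈ Uset, MvPowerSeries.monomial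
          (embMon v (lcmF I) (clM I + I.card)) ((-1 : ℚ) ^ I.card))) := by
  have hdeg' : ∀ m ∈ G, KoszulAux.mdeg m = 2 := hdeg
  refine ⟨?_, ?_, ?_⟩
  · intro I h1 h2 h3 h4
    exact KoszulAux.part1 hdeg' h𝔞 I h1 h2 h3 h4
  · intro I h1 h2 h3
    exact KoszulAux.part2 hdeg' h𝔞 I h1 h2 h3
  · intro Uset hU
    congr 1
    refine Finset.sum_congr rfl fun I hI => ?_
    obtain ⟨h1, h2, h3⟩ := hU I hI
    rw [show ((lcmF I).sum fun _ e => e) = clM I + I.card from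
      KoszulAux.part2 hdeg' h𝔞 I h1 h2 h3]
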